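/- Let a₀, a₁, a₂ : ℝ³ → ℝ be C^1 functions and μ : ℝ³ → ℝ a C^1 function such that the products A₂ = μa₂, A₁ = μa₁, A₀ = μa₀ satisfy the exactness conditions ∂A₂/∂y = ∂A₁/∂p, ∂A₂/∂x = ∂A₀/∂p, ∂A₁/∂x = ∂A₀/∂y everywhere. Then μ satisfies the identity [(∂a₀/∂y − ∂a₁/∂x)a₂ + (∂a₂/∂x − ∂a₀/∂p)a₁ + (∂a₁/∂p − ∂a₂/∂y)a₀] · μ = 0 at every point. -/

import Mathlib

noncomputable section

/-- Partial derivative w.r.t. the first variable. -/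
def pd1 (f : ℝ → ℝ → ℝ → ℝ) (x y p : ℝ) : ℝ := deriv (fun t => f t y p) x

/-- Partial derivative w.r.t. the second variable. -/
def pd2 (f : ℝ → ℝ → ℝ → ℝ) (x y p : ℝ) : ℝ := deriv (fun t => f x t p) y

/-- Partial derivative w.r.t. the third variable. -/
def pd3 (f : ℝ → ℝ → ℝ → ℝ) (x y p : ℝ) : ℝ := deriv (fun t => f x y t) p

/-- `f : ℝ³ → ℝ` (curried) is continuously differentiable. -/
def C1 (f : ℝ → ℝ → ℝ → ℝ) : Prop :=
  ContDiff ℝ 1 (fun q : ℝ × ℝ × ℝ => f q.1 q.2.1 q.2.2)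

/-- The three exactness symmetry conditions for coefficients `a₂, a₁, a₀`. -/
def ExactConds (a0 a1 a2 : ℝ → ℝ → ℝ → ℝ) : Prop :=
  (∀ x y p, pd2 a2 x y p = pd3 a1 x y p) ∧
  (∀ x y p, pd1 a2 x y p = pd3 a0 x y p) ∧
  (∀ x y p, pd1 a1 x y p = pd2 a0 x y p)

lemma C1.diff1 {f : ℝ → ℝ → ℝ → ℝ} (hf : C1 f) (x y p : ℝ) :
    DifferentiableAt ℝ (fun t => f t y p) x := by
  have h := (hf.differentiable one_ne_zero).differentiableAt (x := (x, y, p))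
  exact h.comp (f := fun t : ℝ => (t, y, p)) x ((differentiableAt_id.prodMk (differentiableAt_const (y, p))))

lemma C1.diff2 {f : ℝ → ℝ → ℝ → ℝ} (hf : C1 f) (x y p : ℝ) :
    DifferentiableAt ℝ (fun t => f x t p) y := by
  have h := (hf.differentiable one_ne_zero).differentiableAt (x := (x, y, p))
  exact h.comp (f := fun t : ℝ => (x, t, p)) y (((differentiableAt_const x).prodMk
    (differentiableAt_id.prodMk (differentiableAt_const p))))

lemma C1.diff3 {f : ℝ → ℝ → ℝ → ℝ} (hf : C1 f) (x y p : ℝ) :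
    DifferentiableAt ℝ (fun t => f x y t) p := by
  have h := (hf.differentiable one_ne_zero).differentiableAt (x := (x, y, p))
  exact h.comp (f := fun t : ℝ => (x, y, t)) p (((differentiableAt_const x).prodMk
    ((differentiableAt_const y).prodMk differentiableAt_id)))

theorem integrating_factor_identity
    (a0 a1 a2 μ : ℝ → ℝ → ℝ → ℝ)
    (ha0 : C1 a0) (ha1 : C1 a1) (ha2 : C1 a2) (hμ : C1 μ)
    (hexact : ExactConds (fun x y p => μ x y p * a0 x y p)
      (fun x y p => μ x y p * a1 x y p)
      (fun x y p => μ x y p * a2 x y p)) :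
    ∀ x y p,
      ((pd2 a0 x y p - pd1 a1 x y p) * a2 x y p +
       (pd1 a2 x y p - pd3 a0 x y p) * a1 x y p +
       (pd3 a1 x y p - pd2 a2 x y p) * a0 x y p) * μ x y p = 0 := by
  intro x y p
  obtain ⟨h1, h2, h3⟩ := hexact
  have e1 := h1 x y p
  have e2 := h2 x y p
  have e3 := h3 x y p
  simp only [pd1, pd2, pd3] at e1 e2 e3 ⊢
  rw [deriv_fun_mul (hμ.diff2 x y p) (ha2.diff2 x y p),
      deriv_fun_mul (hμ.diff3 x y p) (ha1.diff3 x y p)] at e1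
  rw [deriv_fun_mul (hμ.diff1 x y p) (ha2.diff1 x y p),
      deriv_fun_mul (hμ.diff3 x y p) (ha0.diff3 x y p)] at e2
  rw [deriv_fun_mul (hμ.diff1 x y p) (ha1.diff1 x y p),
      deriv_fun_mul (hμ.diff2 x y p) (ha0.diff2 x y p)] at e3
  linear_combination (-a0 x y p) * e1 + a1 x y p * e2 - a2 x y p * e3
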